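/- arXiv:2407.15095 — 3 statements merged into one kernel-verified Lean document; each statement's English description precedes it below -/
import Mathlib

section
/- Let U ⊆ ℝ² be open and f : U → ℝ be C³. Define the vector field X : U → ℝ² by X = (∂₂f, −∂₁f). Then on U: (i) div X := ∂₁X₁ + ∂₂X₂ = 0; and (ii) div(X·∇X) = −2·det Hess f, where (X·∇X)ᵢ := X₁∂₁Xᵢ + X₂∂₂Xᵢ and det Hess f := ∂₁₁f·∂₂₂f − (∂₁₂f)². Consequently, X satisfies the flat Bao–Ratiu equations div X = 0 and div(X·∇X) = 0 on U if and only if det Hess f = 0 on U. -/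
/-- First partial derivative of a function on `ℝ × ℝ`. -/
noncomputable def pd1 (f : ℝ × ℝ → ℝ) (x : ℝ × ℝ) : ℝ := fderiv ℝ f x (1, 0)

/-- Second partial derivative of a function on `ℝ × ℝ`. -/
noncomputable def pd2 (f : ℝ × ℝ → ℝ) (x : ℝ × ℝ) : ℝ := fderiv ℝ f x (0, 1)

section aux
variable {f g : ℝ × ℝ → ℝ} {x : ℝ × ℝ}

lemma pd_fderiv (f : ℝ × ℝ → ℝ) (v : ℝ × ℝ) (x w : ℝ × ℝ)
    (hf : DifferentiableAt ℝ (fderiv ℝ f) x) :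
    fderiv ℝ (fun y => fderiv ℝ f y v) x w = fderiv ℝ (fderiv ℝ f) x w v := by
  have h1 : HasFDerivAt (fun y => fderiv ℝ f y v)
      ((ContinuousLinearMap.apply ℝ ℝ v).comp (fderiv ℝ (fderiv ℝ f) x)) x :=
    (ContinuousLinearMap.apply ℝ ℝ v).hasFDerivAt.comp x hf.hasFDerivAt
  rw [h1.fderiv]; rfl

lemma pd_cd {n : ℕ} (v : ℝ × ℝ) (hf : ContDiffAt ℝ (n+1) f x) :
    ContDiffAt ℝ n (fun y => fderiv ℝ f y v) x := by
  have h1 : ContDiffAt ℝ n (fderiv ℝ f) x := hf.fderiv_right (by norm_cast)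
  exact h1.clm_apply contDiffAt_const

lemma cd_pd1 {n : ℕ} (hf : ContDiffAt ℝ (n+1) f x) : ContDiffAt ℝ n (pd1 f) x := pd_cd _ hf
lemma cd_pd2 {n : ℕ} (hf : ContDiffAt ℝ (n+1) f x) : ContDiffAt ℝ n (pd2 f) x := pd_cd _ hf

lemma clairaut (hf : ContDiffAt ℝ 2 f x) : pd1 (pd2 f) x = pd2 (pd1 f) x := by
  have hd : DifferentiableAt ℝ (fderiv ℝ f) x :=
    (hf.fderiv_right (m := 1) (by norm_num)).differentiableAt (by norm_num)
  have hsym := hf.isSymmSndFDerivAt (by simp [minSmoothness_of_isRCLikeNormedField])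
  simp only [pd1, pd2]
  rw [show pd2 f = fun y => fderiv ℝ f y (0,1) from rfl,
      show pd1 f = fun y => fderiv ℝ f y (1,0) from rfl]
  rw [pd_fderiv f (0,1) x (1,0) hd, pd_fderiv f (1,0) x (0,1) hd]
  exact hsym _ _

lemma pd_comb (v : ℝ × ℝ) (g1 h1 g2 h2 : ℝ × ℝ → ℝ)
    (d1 : DifferentiableAt ℝ g1 x) (d2 : DifferentiableAt ℝ h1 x)
    (d3 : DifferentiableAt ℝ g2 x) (d4 : DifferentiableAt ℝ h2 x) :
    fderiv ℝ (fun y => g1 y * h1 y + g2 y * h2 y) x v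
      = fderiv ℝ g1 x v * h1 x + g1 x * fderiv ℝ h1 x v
        + (fderiv ℝ g2 x v * h2 x + g2 x * fderiv ℝ h2 x v) := by
  rw [fderiv_fun_add (f := fun y => g1 y * h1 y) (g := fun y => g2 y * h2 y) (d1.mul d2) (d3.mul d4), fderiv_fun_mul d1 d2, fderiv_fun_mul d3 d4]
  simp [mul_comm]
  ring

lemma pd1_comb (g1 h1 g2 h2 : ℝ × ℝ → ℝ)
    (d1 : DifferentiableAt ℝ g1 x) (d2 : DifferentiableAt ℝ h1 x)
    (d3 : DifferentiableAt ℝ g2 x) (d4 : DifferentiableAt ℝ h2 x) :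
    pd1 (fun y => g1 y * h1 y + g2 y * h2 y) x
      = pd1 g1 x * h1 x + g1 x * pd1 h1 x + (pd1 g2 x * h2 x + g2 x * pd1 h2 x) :=
  pd_comb (1,0) g1 h1 g2 h2 d1 d2 d3 d4

lemma pd2_comb (g1 h1 g2 h2 : ℝ × ℝ → ℝ)
    (d1 : DifferentiableAt ℝ g1 x) (d2 : DifferentiableAt ℝ h1 x)
    (d3 : DifferentiableAt ℝ g2 x) (d4 : DifferentiableAt ℝ h2 x) :
    pd2 (fun y => g1 y * h1 y + g2 y * h2 y) x
      = pd2 g1 x * h1 x + g1 x * pd2 h1 x + (pd2 g2 x * h2 x + g2 x * pd2 h2 x) :=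
  pd_comb (0,1) g1 h1 g2 h2 d1 d2 d3 d4

lemma pd1_neg (g : ℝ × ℝ → ℝ) : pd1 (fun y => -(g y)) = fun x => -(pd1 g x) := by
  funext x; simp [pd1, fderiv_neg]

lemma pd2_neg (g : ℝ × ℝ → ℝ) : pd2 (fun y => -(g y)) = fun x => -(pd2 g x) := by
  funext x; simp [pd2, fderiv_neg]

lemma part2aux (f : ℝ × ℝ → ℝ) (x : ℝ × ℝ) (hf3 : ContDiffAt ℝ 3 f x)
    (hBB' : pd1 (pd2 f) =ᶠ[nhds x] pd2 (pd1 f)) :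
    pd1 (fun y => pd2 f y * pd1 (pd2 f) y + (-(pd1 f y)) * pd2 (pd2 f) y) x
      + pd2 (fun y => pd2 f y * pd1 (fun z => -(pd1 f z)) y
            + (-(pd1 f y)) * pd2 (fun z => -(pd1 f z)) y) x
    = -2 * (pd1 (pd1 f) x * pd2 (pd2 f) x - (pd1 (pd2 f) x) ^ 2) := by
  have hf2 : ContDiffAt ℝ 2 f x := hf3.of_le (by norm_num)
  have hp2 : ContDiffAt ℝ 2 (pd1 f) x := cd_pd1 (n := 2) (by exact_mod_cast hf3)
  have hq2 : ContDiffAt ℝ 2 (pd2 f) x := cd_pd2 (n := 2) (by exact_mod_cast hf3)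
  have dp : DifferentiableAt ℝ (pd1 f) x := hp2.differentiableAt (by norm_num)
  have dq : DifferentiableAt ℝ (pd2 f) x := hq2.differentiableAt (by norm_num)
  have dA : DifferentiableAt ℝ (pd1 (pd1 f)) x :=
    (cd_pd1 (n := 1) (by exact_mod_cast hp2)).differentiableAt (by norm_num)
  have dB : DifferentiableAt ℝ (pd1 (pd2 f)) x :=
    (cd_pd1 (n := 1) (by exact_mod_cast hq2)).differentiableAt (by norm_num)
  have dB' : DifferentiableAt ℝ (pd2 (pd1 f)) x :=
    (cd_pd2 (n := 1) (by exact_mod_cast hp2)).differentiableAt (by norm_num)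
  have dC : DifferentiableAt ℝ (pd2 (pd2 f)) x :=
    (cd_pd2 (n := 1) (by exact_mod_cast hq2)).differentiableAt (by norm_num)
  simp only [pd1_neg, pd2_neg]
  rw [pd1_comb (pd2 f) (pd1 (pd2 f)) (fun y => -(pd1 f y)) (pd2 (pd2 f))
        dq dB dp.neg dC,
      pd2_comb (pd2 f) (fun y => -(pd1 (pd1 f) y)) (fun y => -(pd1 f y))
        (fun y => -(pd2 (pd1 f) y)) dq dA.neg dp.neg dB'.neg]
  simp only [pd1_neg, pd2_neg]
  -- third-order symmetry
  have e3 : pd1 (pd1 (pd2 f)) x = pd2 (pd1 (pd1 f)) x := by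
    have h1 : fderiv ℝ (pd1 (pd2 f)) x = fderiv ℝ (pd2 (pd1 f)) x :=
      Filter.EventuallyEq.fderiv_eq hBB'
    have h2 : pd1 (pd1 (pd2 f)) x = pd1 (pd2 (pd1 f)) x := by
      simp only [pd1]; rw [h1]
    rw [h2]
    exact clairaut hp2
  have e4 : pd2 (pd2 (pd1 f)) x = pd1 (pd2 (pd2 f)) x := by
    have h1 : fderiv ℝ (pd2 (pd1 f)) x = fderiv ℝ (pd1 (pd2 f)) x :=
      Filter.EventuallyEq.fderiv_eq hBB'.symm
    have h2 : pd2 (pd2 (pd1 f)) x = pd2 (pd1 (pd2 f)) x := by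
      simp only [pd2]; rw [h1]
    rw [h2]
    exact (clairaut hq2).symm
  have hBx : pd1 (pd2 f) x = pd2 (pd1 f) x := clairaut hf2
  rw [e3, e4, hBx]
  ring

end aux

/-- If `U ⊆ ℝ²` is open and `f : U → ℝ` is `C³`, the field `X = (∂₂ f, −∂₁ f)` satisfies
`div X = 0` and `div (X·∇X) = −2 det Hess f` on `U`; hence `X` satisfies the flat
Bao–Ratiu equations on `U` iff `det Hess f = 0` on `U`. -/
theorem stmt0 (U : Set (ℝ × ℝ)) (hU : IsOpen U) (f : ℝ × ℝ → ℝ)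
    (hf : ContDiffOn ℝ 3 f U)
    (X : ℝ × ℝ → ℝ × ℝ)
    (hX : X = fun x => (pd2 f x, -(pd1 f x))) :
    (∀ x ∈ U, pd1 (fun y => (X y).1) x + pd2 (fun y => (X y).2) x = 0) ∧
    (∀ x ∈ U,
      pd1 (fun y => (X y).1 * pd1 (fun z => (X z).1) y + (X y).2 * pd2 (fun z => (X z).1) y) x
        + pd2 (fun y => (X y).1 * pd1 (fun z => (X z).2) y
              + (X y).2 * pd2 (fun z => (X z).2) y) x
      = -2 * (pd1 (pd1 f) x * pd2 (pd2 f) x - (pd1 (pd2 f) x) ^ 2)) ∧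
    ((∀ x ∈ U,
        pd1 (fun y => (X y).1) x + pd2 (fun y => (X y).2) x = 0 ∧
        pd1 (fun y => (X y).1 * pd1 (fun z => (X z).1) y + (X y).2 * pd2 (fun z => (X z).1) y) x
          + pd2 (fun y => (X y).1 * pd1 (fun z => (X z).2) y
                + (X y).2 * pd2 (fun z => (X z).2) y) x = 0)
      ↔ (∀ x ∈ U, pd1 (pd1 f) x * pd2 (pd2 f) x - (pd1 (pd2 f) x) ^ 2 = 0)) := by
  subst hX
  have hf3 : ∀ x ∈ U, ContDiffAt ℝ 3 f x := fun x hx => hf.contDiffAt (hU.mem_nhds hx)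
  have hBB' : ∀ x ∈ U, pd1 (pd2 f) =ᶠ[nhds x] pd2 (pd1 f) := by
    intro x hx
    filter_upwards [hU.mem_nhds hx] with y hy
    exact clairaut ((hf3 y hy).of_le (by norm_num))
  have part1 : ∀ x ∈ U,
      pd1 (fun y => ((fun x => (pd2 f x, -(pd1 f x))) y).1) x
        + pd2 (fun y => ((fun x => (pd2 f x, -(pd1 f x))) y).2) x = 0 := by
    intro x hx
    show pd1 (pd2 f) x + pd2 (fun y => -(pd1 f y)) x = 0
    rw [pd2_neg, clairaut ((hf3 x hx).of_le (by norm_num))]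
    ring
  have part2 : ∀ x ∈ U,
      pd1 (fun y => ((fun x => (pd2 f x, -(pd1 f x))) y).1
            * pd1 (fun z => ((fun x => (pd2 f x, -(pd1 f x))) z).1) y
          + ((fun x => (pd2 f x, -(pd1 f x))) y).2
            * pd2 (fun z => ((fun x => (pd2 f x, -(pd1 f x))) z).1) y) x
        + pd2 (fun y => ((fun x => (pd2 f x, -(pd1 f x))) y).1
            * pd1 (fun z => ((fun x => (pd2 f x, -(pd1 f x))) z).2) y
          + ((fun x => (pd2 f x, -(pd1 f x))) y).2
            * pd2 (fun z => ((fun x => (pd2 f x, -(pd1 f x))) z).2) y) x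
      = -2 * (pd1 (pd1 f) x * pd2 (pd2 f) x - (pd1 (pd2 f) x) ^ 2) := by
    intro x hx
    exact part2aux f x (hf3 x hx) (hBB' x hx)
  refine ⟨part1, part2, ?_⟩
  constructor
  · intro h x hx
    have h2 := (h x hx).2
    have h3 := part2 x hx
    linarith [h3.symm.trans h2]
  · intro h x hx
    refine ⟨part1 x hx, ?_⟩
    rw [part2 x hx, h x hx]
    ring
end

section
/- Let K : ℝ² → ℝ be C² with K(0) = 2. Then there exist real numbers a, b, c, d such that the function ĥ(x₁,x₂) := x₁² + 3x₁x₂ + (5/2)x₂² + a x₁³ + b x₁² x₂ + c x₁ x₂² + d x₂³ satisfies: there are constants C > 0 and r > 0 with |det Hess ĥ(x) − (K(x)/2)(1 + 2∂₁ĥ(x) + |∇ĥ(x)|²)| ≤ C(x₁² + x₂²) for all |x| ≤ r. Moreover, there are infinitely many choices of (a,b,c,d) with this property. -/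
/-- Determinant of the Hessian: `∂₁₁f·∂₂₂f − (∂₁₂f)²`. -/
noncomputable def detHess (f : ℝ × ℝ → ℝ) (x : ℝ × ℝ) : ℝ :=
  pd1 (pd1 f) x * pd2 (pd2 f) x - (pd1 (pd2 f) x) ^ 2

/-- `h` is an approximate solution of the Euclidean-model Bao–Ratiu Monge–Ampère equation
with coefficient `K`, with quadratic error near the origin. -/
noncomputable def IsQuadApproxSol (K h : ℝ × ℝ → ℝ) : Prop :=
  ∃ C > (0 : ℝ), ∃ r > (0 : ℝ), ∀ x : ℝ × ℝ, Real.sqrt (x.1 ^ 2 + x.2 ^ 2) ≤ r →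
    |detHess h x
        - K x / 2 * (1 + 2 * pd1 h x + ((pd1 h x) ^ 2 + (pd2 h x) ^ 2))|
      ≤ C * (x.1 ^ 2 + x.2 ^ 2)

/-- The cubic ansatz for the initial approximate solution in the elliptic case. -/
noncomputable def hhatE (a b c d : ℝ) : ℝ × ℝ → ℝ :=
  fun x => x.1 ^ 2 + 3 * x.1 * x.2 + (5 / 2) * x.2 ^ 2
    + a * x.1 ^ 3 + b * x.1 ^ 2 * x.2 + c * x.1 * x.2 ^ 2 + d * x.2 ^ 3

/-- A general cubic polynomial on `ℝ × ℝ`. -/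
noncomputable def cubic (c00 c10 c01 c20 c11 c02 c30 c21 c12 c03 : ℝ) : ℝ × ℝ → ℝ :=
  fun p => c00 + c10 * p.1 + c01 * p.2 + c20 * (p.1 * p.1) + c11 * (p.1 * p.2)
    + c02 * (p.2 * p.2) + c30 * (p.1 * p.1 * p.1) + c21 * (p.1 * p.1 * p.2)
    + c12 * (p.1 * p.2 * p.2) + c03 * (p.2 * p.2 * p.2)

theorem contDiff_cubic {n : ℕ∞} (c00 c10 c01 c20 c11 c02 c30 c21 c12 c03 : ℝ) :
    ContDiff ℝ n (cubic c00 c10 c01 c20 c11 c02 c30 c21 c12 c03) := by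
  unfold cubic; fun_prop

theorem hasFDerivAt_cubic (c00 c10 c01 c20 c11 c02 c30 c21 c12 c03 : ℝ) (x : ℝ × ℝ) :
    HasFDerivAt (cubic c00 c10 c01 c20 c11 c02 c30 c21 c12 c03)
      ((c10 + 2*c20*x.1 + c11*x.2 + 3*c30*(x.1*x.1) + 2*c21*(x.1*x.2) + c12*(x.2*x.2))
          • ContinuousLinearMap.fst ℝ ℝ ℝ
        + (c01 + c11*x.1 + 2*c02*x.2 + c21*(x.1*x.1) + 2*c12*(x.1*x.2) + 3*c03*(x.2*x.2))
          • ContinuousLinearMap.snd ℝ ℝ ℝ) x := by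
  have h1 : HasFDerivAt (fun p : ℝ × ℝ => p.1) (ContinuousLinearMap.fst ℝ ℝ ℝ) x :=
    hasFDerivAt_fst
  have h2 : HasFDerivAt (fun p : ℝ × ℝ => p.2) (ContinuousLinearMap.snd ℝ ℝ ℝ) x :=
    hasFDerivAt_snd
  have H0 := (hasFDerivAt_const c00 x).add (h1.const_mul c10)
  have H1 := H0.add (h2.const_mul c01)
  have H2 := H1.add ((h1.mul h1).const_mul c20)
  have H3 := H2.add ((h1.mul h2).const_mul c11)
  have H4 := H3.add ((h2.mul h2).const_mul c02)
  have H5 := H4.add (((h1.mul h1).mul h1).const_mul c30)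
  have H6 := H5.add (((h1.mul h1).mul h2).const_mul c21)
  have H7 := H6.add (((h1.mul h2).mul h2).const_mul c12)
  have H8 := H7.add (((h2.mul h2).mul h2).const_mul c03)
  unfold cubic
  refine (H8.congr_of_eventuallyEq (Filter.Eventually.of_forall fun p => ?_)).congr_fderiv ?_
  · simp only [Pi.add_apply, Pi.mul_apply]
  ext <;>
  · simp [ContinuousLinearMap.smul_apply, ContinuousLinearMap.add_apply]
    ring

theorem pd1_cubic (c00 c10 c01 c20 c11 c02 c30 c21 c12 c03 : ℝ) :
    pd1 (cubic c00 c10 c01 c20 c11 c02 c30 c21 c12 c03)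
      = cubic c10 (2*c20) c11 (3*c30) (2*c21) c12 0 0 0 0 := by
  funext x
  rw [pd1, (hasFDerivAt_cubic c00 c10 c01 c20 c11 c02 c30 c21 c12 c03 x).fderiv]
  simp [cubic]

theorem pd2_cubic (c00 c10 c01 c20 c11 c02 c30 c21 c12 c03 : ℝ) :
    pd2 (cubic c00 c10 c01 c20 c11 c02 c30 c21 c12 c03)
      = cubic c01 c11 (2*c02) c21 (2*c12) (3*c03) 0 0 0 0 := by
  funext x
  rw [pd2, (hasFDerivAt_cubic c00 c10 c01 c20 c11 c02 c30 c21 c12 c03 x).fderiv]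
  simp [cubic]

/-- The error function of the approximate solution. -/
noncomputable def FF (K : ℝ × ℝ → ℝ) (a b c d : ℝ) : ℝ × ℝ → ℝ := fun x =>
  cubic 2 (6*a) (2*b) 0 0 0 0 0 0 0 x * cubic 5 (2*c) (6*d) 0 0 0 0 0 0 0 x
    - cubic 3 (2*b) (2*c) 0 0 0 0 0 0 0 x * cubic 3 (2*b) (2*c) 0 0 0 0 0 0 0 x
    - 1/2 * K x * (1 + 2 * cubic 0 2 3 (3*a) (2*b) c 0 0 0 0 x
        + (cubic 0 2 3 (3*a) (2*b) c 0 0 0 0 x * cubic 0 2 3 (3*a) (2*b) c 0 0 0 0 x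
          + cubic 0 3 5 b (2*c) (3*d) 0 0 0 0 x * cubic 0 3 5 b (2*c) (3*d) 0 0 0 0 x))

theorem hhatE_eq (a b c d : ℝ) : hhatE a b c d = cubic 0 0 0 1 3 (5/2) a b c d := by
  funext p; simp only [hhatE, cubic]; ring

theorem pd1_hhatE (a b c d : ℝ) :
    pd1 (hhatE a b c d) = cubic 0 2 3 (3*a) (2*b) c 0 0 0 0 := by
  rw [hhatE_eq, pd1_cubic]; funext p; simp only [cubic]; ring

theorem pd2_hhatE (a b c d : ℝ) :
    pd2 (hhatE a b c d) = cubic 0 3 5 b (2*c) (3*d) 0 0 0 0 := by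
  rw [hhatE_eq, pd2_cubic]; funext p; simp only [cubic]; ring

theorem FF_eq (K : ℝ × ℝ → ℝ) (a b c d : ℝ) (x : ℝ × ℝ) :
    detHess (hhatE a b c d) x
      - K x / 2 * (1 + 2 * pd1 (hhatE a b c d) x
          + ((pd1 (hhatE a b c d) x) ^ 2 + (pd2 (hhatE a b c d) x) ^ 2))
      = FF K a b c d x := by
  simp only [detHess, pd1_hhatE, pd2_hhatE, pd1_cubic, pd2_cubic, FF, cubic]
  ring

theorem contDiff_FF (K : ℝ × ℝ → ℝ) (hK : ContDiff ℝ 2 K) (a b c d : ℝ) :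
    ContDiff ℝ 2 (FF K a b c d) := by
  unfold FF cubic; fun_prop

theorem FF_zero (K : ℝ × ℝ → ℝ) (hK0 : K (0, 0) = 2) (a b c d : ℝ) :
    FF K a b c d (0, 0) = 0 := by
  have hK0' : K 0 = 2 := hK0
  simp [FF, cubic, hK0']; norm_num [hK0]

theorem fderiv_FF_zero (K : ℝ × ℝ → ℝ) (hK : ContDiff ℝ 2 K) (hK0 : K (0, 0) = 2)
    (a b c d : ℝ)
    (h1 : 30*a + 4*c - 12*b = 4 + pd1 K (0, 0) / 2)
    (h2 : 10*b + 12*d - 12*c = 6 + pd2 K (0, 0) / 2) :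
    fderiv ℝ (FF K a b c d) (0, 0) = 0 := by
  have hK' : HasFDerivAt K (fderiv ℝ K (0, 0)) (0, 0) :=
    ((hK.differentiable (by norm_num)) (0, 0)).hasFDerivAt
  have hA := hasFDerivAt_cubic 2 (6*a) (2*b) 0 0 0 0 0 0 0 ((0, 0) : ℝ × ℝ)
  have hB := hasFDerivAt_cubic 5 (2*c) (6*d) 0 0 0 0 0 0 0 ((0, 0) : ℝ × ℝ)
  have hC := hasFDerivAt_cubic 3 (2*b) (2*c) 0 0 0 0 0 0 0 ((0, 0) : ℝ × ℝ)
  have hP := hasFDerivAt_cubic 0 2 3 (3*a) (2*b) c 0 0 0 0 ((0, 0) : ℝ × ℝ)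
  have hQ := hasFDerivAt_cubic 0 3 5 b (2*c) (3*d) 0 0 0 0 ((0, 0) : ℝ × ℝ)
  have hG := ((hasFDerivAt_const (1:ℝ) ((0,0) : ℝ × ℝ)).add (hP.const_mul 2)).add
    ((hP.mul hP).add (hQ.mul hQ))
  have hF' : HasFDerivAt (FF K a b c d) _ ((0, 0) : ℝ × ℝ) :=
    ((hA.mul hB).sub (hC.mul hC)).sub ((hK'.const_mul (1/2)).mul hG)
  rw [hF'.fderiv]
  apply ContinuousLinearMap.ext
  intro v
  have hv : v = v.1 • ((1:ℝ), (0:ℝ)) + v.2 • ((0:ℝ), (1:ℝ)) := by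
    apply Prod.ext <;> simp
  simp only [pd1, pd2] at h1 h2
  rw [hv]
  simp only [ContinuousLinearMap.add_apply, ContinuousLinearMap.smul_apply,
    ContinuousLinearMap.coe_fst', ContinuousLinearMap.coe_snd', ContinuousLinearMap.sub_apply,
    map_add, map_smul, cubic, ContinuousLinearMap.zero_apply, smul_eq_mul]
  simp only [ContinuousLinearMap.add_apply, ContinuousLinearMap.smul_apply,
    ContinuousLinearMap.coe_fst', ContinuousLinearMap.coe_snd', smul_eq_mul, hK0]
  norm_num
  linear_combination v.1 * h1 + v.2 * h2

theorem quad_bound (F : ℝ × ℝ → ℝ) (hF : ContDiff ℝ 2 F) (h0 : F (0, 0) = 0)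
    (h1 : fderiv ℝ F (0, 0) = 0) :
    ∃ C > (0 : ℝ), ∃ r > (0 : ℝ), ∀ x : ℝ × ℝ, Real.sqrt (x.1 ^ 2 + x.2 ^ 2) ≤ r →
      |F x| ≤ C * (x.1 ^ 2 + x.2 ^ 2) := by
  have hd : Differentiable ℝ F := hF.differentiable (by norm_num)
  have hf' : ContDiff ℝ 1 (fderiv ℝ F) := hF.fderiv_right (by norm_num)
  obtain ⟨L, t, ht, hlip⟩ :=
    (hf'.contDiffAt : ContDiffAt ℝ 1 (fderiv ℝ F) (0, 0)).exists_lipschitzOnWith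
  obtain ⟨r, hr, hball⟩ := Metric.mem_nhds_iff.1 ht
  refine ⟨L + 1, by positivity, r / 2, by positivity, ?_⟩
  intro x hx
  have habs1 : |x.1| ≤ Real.sqrt (x.1 ^ 2 + x.2 ^ 2) := by
    rw [← Real.sqrt_sq_eq_abs]
    exact Real.sqrt_le_sqrt (by nlinarith [sq_nonneg x.2])
  have habs2 : |x.2| ≤ Real.sqrt (x.1 ^ 2 + x.2 ^ 2) := by
    rw [← Real.sqrt_sq_eq_abs]
    exact Real.sqrt_le_sqrt (by nlinarith [sq_nonneg x.1])
  have hxn : ‖x‖ ≤ r / 2 := by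
    rw [Prod.norm_def]
    simp only [Real.norm_eq_abs]
    exact max_le (habs1.trans hx) (habs2.trans hx)
  have hsub : Metric.closedBall (0 : ℝ × ℝ) ‖x‖ ⊆ t := by
    intro y hy
    apply hball
    rw [Metric.mem_ball]
    calc dist y 0 ≤ ‖x‖ := Metric.mem_closedBall.1 hy
      _ ≤ r / 2 := hxn
      _ < r := by linarith
  have hbound : ∀ y ∈ Metric.closedBall (0 : ℝ × ℝ) ‖x‖,
      ‖fderiv ℝ F y‖ ≤ (L : ℝ) * ‖x‖ := by
    intro y hy
    have h00 : ((0, 0) : ℝ × ℝ) = 0 := rfl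
    have hmem0 : (0 : ℝ × ℝ) ∈ Metric.closedBall (0 : ℝ × ℝ) ‖x‖ := by
      simp [norm_nonneg]
    have := hlip.dist_le_mul y (hsub hy) 0 (hsub hmem0)
    rw [← h00, h1] at this
    calc ‖fderiv ℝ F y‖ = dist (fderiv ℝ F y) 0 := by simp [dist_eq_norm]
      _ ≤ (L : ℝ) * dist y 0 := by rw [h00] at this; exact this
      _ ≤ (L : ℝ) * ‖x‖ := by
          have : dist y 0 ≤ ‖x‖ := Metric.mem_closedBall.1 hy
          exact mul_le_mul_of_nonneg_left this L.coe_nonneg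
  have key := Convex.norm_image_sub_le_of_norm_fderiv_le
    (fun y _ => hd y) hbound (convex_closedBall (0 : ℝ × ℝ) ‖x‖)
    (by simp [norm_nonneg] : (0 : ℝ × ℝ) ∈ Metric.closedBall (0 : ℝ × ℝ) ‖x‖)
    (by simp [Metric.mem_closedBall, dist_eq_norm] : x ∈ Metric.closedBall (0 : ℝ × ℝ) ‖x‖)
  have hx2 : ‖x‖ ^ 2 ≤ x.1 ^ 2 + x.2 ^ 2 := by
    rw [Prod.norm_def]
    simp only [Real.norm_eq_abs]
    rcases max_cases |x.1| |x.2| with ⟨h, _⟩ | ⟨h, _⟩ <;> rw [h] <;>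
      nlinarith [sq_nonneg x.1, sq_nonneg x.2, sq_abs x.1, sq_abs x.2]
  have hF0 : F 0 = 0 := h0
  calc |F x| = ‖F x - F 0‖ := by rw [hF0, sub_zero, Real.norm_eq_abs]
    _ ≤ (L : ℝ) * ‖x‖ * ‖x - 0‖ := key
    _ = (L : ℝ) * ‖x‖ ^ 2 := by rw [sub_zero]; ring
    _ ≤ ((L : ℝ) + 1) * (x.1 ^ 2 + x.2 ^ 2) := by
        nlinarith [norm_nonneg x, L.coe_nonneg, sq_nonneg x.1, sq_nonneg x.2]

theorem keyLemma (K : ℝ × ℝ → ℝ) (hK : ContDiff ℝ 2 K) (hK0 : K (0, 0) = 2)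
    (a b c d : ℝ)
    (h1 : 30*a + 4*c - 12*b = 4 + pd1 K (0, 0) / 2)
    (h2 : 10*b + 12*d - 12*c = 6 + pd2 K (0, 0) / 2) :
    IsQuadApproxSol K (hhatE a b c d) := by
  obtain ⟨C, hC, r, hr, hbd⟩ := quad_bound (FF K a b c d) (contDiff_FF K hK a b c d)
    (FF_zero K hK0 a b c d) (fderiv_FF_zero K hK hK0 a b c d h1 h2)
  refine ⟨C, hC, r, hr, fun x hx => ?_⟩
  rw [FF_eq]
  exact hbd x hx

/-- Elliptic case: if `K` is `C²` with `K(0) = 2`, there exist (indeed infinitely many)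
cubic coefficients `(a,b,c,d)` for which the approximate solution `ĥ` has quadratic error. -/
theorem stmt3 (K : ℝ × ℝ → ℝ) (hK : ContDiff ℝ 2 K) (hK0 : K (0, 0) = 2) :
    (∃ a b c d : ℝ, IsQuadApproxSol K (hhatE a b c d)) ∧
    {p : ℝ × ℝ × ℝ × ℝ | IsQuadApproxSol K (hhatE p.1 p.2.1 p.2.2.1 p.2.2.2)}.Infinite := by
  constructor
  · exact ⟨(4 + pd1 K (0, 0) / 2) / 30, 0, 0, (6 + pd2 K (0, 0) / 2) / 12,
      keyLemma K hK hK0 _ _ _ _ (by ring) (by ring)⟩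
  · apply Set.infinite_of_injective_forall_mem
      (f := fun t : ℝ => (((4 + pd1 K (0, 0) / 2 - 4 * t) / 30 : ℝ), (0 : ℝ), t,
        ((6 + pd2 K (0, 0) / 2 + 12 * t) / 12 : ℝ)))
    · intro s t h
      simpa using congrArg (fun p : ℝ × ℝ × ℝ × ℝ => p.2.2.1) h
    · intro t
      exact keyLemma K hK hK0 _ _ _ _ (by ring) (by ring)
end

section
/- Let R > 0, γ > 0, and let K : ℝ² → ℝ be C³ with K(0) = 0, ∂₁K(0) = 0, and ∂₂K(0) = 2R (so that |K(x) − 2Rx₂| ≤ C₀|x|² near 0). Then there exist d ∈ ℝ and a homogeneous polynomial P₄ of degree 4 in (x₁,x₂) such that the function ĥ(x₁,x₂) := (γ²/2)x₁² + γ x₁ x₂ + (1/2)x₂² + d x₂³ + P₄(x₁,x₂) satisfies: there are constants C > 0 and r > 0 with |det Hess ĥ(x) − (K(x)/2)(1 + 2∂₁ĥ(x) + |∇ĥ(x)|²)| ≤ C(x₁² + x₂²)^{3/2} for all |x| ≤ r. Moreover one may take d = R/(6γ²). -/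
set_option maxHeartbeats 2000000



namespace Stmt5Aux

lemma pd1_of (f : ℝ × ℝ → ℝ) {L : ℝ × ℝ →L[ℝ] ℝ} {x} (h : HasFDerivAt f L x) :
    pd1 f x = L (1, 0) := by rw [pd1, h.fderiv]

lemma pd2_of (f : ℝ × ℝ → ℝ) {L : ℝ × ℝ →L[ℝ] ℝ} {x} (h : HasFDerivAt f L x) :
    pd2 f x = L (0, 1) := by rw [pd2, h.fderiv]

lemma hP1 (n : ℕ) (x : ℝ × ℝ) : HasFDerivAt (fun y : ℝ × ℝ => y.1 ^ n)
    (((n : ℝ) * x.1 ^ (n - 1)) • ContinuousLinearMap.fst ℝ ℝ ℝ) x :=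
  (hasDerivAt_pow n x.1).comp_hasFDerivAt x hasFDerivAt_fst

lemma hP2 (n : ℕ) (x : ℝ × ℝ) : HasFDerivAt (fun y : ℝ × ℝ => y.2 ^ n)
    (((n : ℝ) * x.2 ^ (n - 1)) • ContinuousLinearMap.snd ℝ ℝ ℝ) x :=
  (hasDerivAt_pow n x.2).comp_hasFDerivAt x hasFDerivAt_snd

noncomputable def F0 (γ d c0 c3 c4 : ℝ) : ℝ × ℝ → ℝ := fun y =>
  γ ^ 2 / 2 * y.1 ^ 2 + γ * y.1 * y.2 + 1 / 2 * y.2 ^ 2 + d * y.2 ^ 3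
    + (c0 * y.1 ^ 4 + c3 * (y.1 * y.2 ^ 3) + c4 * y.2 ^ 4)

noncomputable def F1d (γ d c0 c3 c4 : ℝ) : ℝ × ℝ → ℝ := fun x =>
  γ ^ 2 * x.1 + γ * x.2 + (4 * c0 * x.1 ^ 3 + c3 * x.2 ^ 3)

noncomputable def F2d (γ d c0 c3 c4 : ℝ) : ℝ × ℝ → ℝ := fun x =>
  γ * x.1 + x.2 + 3 * d * x.2 ^ 2 + (3 * c3 * (x.1 * x.2 ^ 2) + 4 * c4 * x.2 ^ 3)

noncomputable def F11 (γ d c0 c3 c4 : ℝ) : ℝ × ℝ → ℝ := fun x => γ ^ 2 + 12 * c0 * x.1 ^ 2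

noncomputable def F22 (γ d c0 c3 c4 : ℝ) : ℝ × ℝ → ℝ := fun x =>
  1 + 6 * d * x.2 + (6 * c3 * (x.1 * x.2) + 12 * c4 * x.2 ^ 2)

noncomputable def F21 (γ d c0 c3 c4 : ℝ) : ℝ × ℝ → ℝ := fun x => γ + 3 * c3 * x.2 ^ 2

noncomputable def Gd (γ d c0 c3 c4 : ℝ) : ℝ × ℝ → ℝ := fun x =>
  1 + 2 * F1d γ d c0 c3 c4 x
    + (F1d γ d c0 c3 c4 x * F1d γ d c0 c3 c4 x + F2d γ d c0 c3 c4 x * F2d γ d c0 c3 c4 x)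

noncomputable def G1d (γ d c0 c3 c4 : ℝ) : ℝ × ℝ → ℝ := fun x =>
  2 * F11 γ d c0 c3 c4 x + 2 * (F1d γ d c0 c3 c4 x * F11 γ d c0 c3 c4 x)
    + 2 * (F2d γ d c0 c3 c4 x * F21 γ d c0 c3 c4 x)

noncomputable def G2d (γ d c0 c3 c4 : ℝ) : ℝ × ℝ → ℝ := fun x =>
  2 * F21 γ d c0 c3 c4 x + 2 * (F1d γ d c0 c3 c4 x * F21 γ d c0 c3 c4 x)
    + 2 * (F2d γ d c0 c3 c4 x * F22 γ d c0 c3 c4 x)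

noncomputable def Ed (γ d c0 c3 c4 : ℝ) (K : ℝ × ℝ → ℝ) : ℝ × ℝ → ℝ := fun x =>
  F11 γ d c0 c3 c4 x * F22 γ d c0 c3 c4 x - F21 γ d c0 c3 c4 x * F21 γ d c0 c3 c4 x
    - 1 / 2 * (K x * Gd γ d c0 c3 c4 x)

noncomputable def E1d (γ d c0 c3 c4 : ℝ) (K : ℝ × ℝ → ℝ) : ℝ × ℝ → ℝ := fun x =>
  24 * c0 * (x.1 * F22 γ d c0 c3 c4 x) + 6 * c3 * (x.2 * F11 γ d c0 c3 c4 x)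
    - 1 / 2 * (fderiv ℝ K x (1, 0) * Gd γ d c0 c3 c4 x + K x * G1d γ d c0 c3 c4 x)

noncomputable def E2d (γ d c0 c3 c4 : ℝ) (K : ℝ × ℝ → ℝ) : ℝ × ℝ → ℝ := fun x =>
  F11 γ d c0 c3 c4 x * (6 * d + (6 * c3 * x.1 + 24 * c4 * x.2))
    - 12 * c3 * (x.2 * F21 γ d c0 c3 c4 x)
    - 1 / 2 * (fderiv ℝ K x (0, 1) * Gd γ d c0 c3 c4 x + K x * G2d γ d c0 c3 c4 x)

variable (γ d c0 c3 c4 : ℝ) (K : ℝ × ℝ → ℝ)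

lemma pdF0_1 : pd1 (F0 γ d c0 c3 c4) = F1d γ d c0 c3 c4 := by
  funext x
  unfold F0 F1d
  have H := ((((((hP1 2 x).const_mul (γ^2/2)).add
      ((hasFDerivAt_fst.const_mul γ).mul hasFDerivAt_snd)).add
      ((hP2 2 x).const_mul (1/2))).add
      ((hP2 3 x).const_mul d)).add
      ((((hP1 4 x).const_mul c0).add
        ((hasFDerivAt_fst.mul (hP2 3 x)).const_mul c3)).add
        ((hP2 4 x).const_mul c4)))
  erw [pd1_of _ H]
  simp
  try ring

lemma pdF0_2 : pd2 (F0 γ d c0 c3 c4) = F2d γ d c0 c3 c4 := by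
  funext x
  unfold F0 F2d
  have H := ((((((hP1 2 x).const_mul (γ^2/2)).add
      ((hasFDerivAt_fst.const_mul γ).mul hasFDerivAt_snd)).add
      ((hP2 2 x).const_mul (1/2))).add
      ((hP2 3 x).const_mul d)).add
      ((((hP1 4 x).const_mul c0).add
        ((hasFDerivAt_fst.mul (hP2 3 x)).const_mul c3)).add
        ((hP2 4 x).const_mul c4)))
  erw [pd2_of _ H]
  simp
  try ring

lemma pdF1d_1 : pd1 (F1d γ d c0 c3 c4) = F11 γ d c0 c3 c4 := by
  funext x
  unfold F1d F11
  have H := (((hasFDerivAt_fst.const_mul (γ^2)).add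
      (hasFDerivAt_snd.const_mul γ)).add
      (((hP1 3 x).const_mul (4*c0)).add ((hP2 3 x).const_mul c3)))
  erw [pd1_of _ H]
  simp
  try ring

lemma pdF2d_1 : pd1 (F2d γ d c0 c3 c4) = F21 γ d c0 c3 c4 := by
  funext x
  unfold F2d F21
  have H := ((((hasFDerivAt_fst.const_mul γ).add hasFDerivAt_snd).add
      ((hP2 2 x).const_mul (3*d))).add
      (((hasFDerivAt_fst.mul (hP2 2 x)).const_mul (3*c3)).add
        ((hP2 3 x).const_mul (4*c4))))
  erw [pd1_of _ H]
  simp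
  try ring

lemma pdF2d_2 : pd2 (F2d γ d c0 c3 c4) = F22 γ d c0 c3 c4 := by
  funext x
  unfold F2d F22
  have H := ((((hasFDerivAt_fst.const_mul γ).add hasFDerivAt_snd).add
      ((hP2 2 x).const_mul (3*d))).add
      (((hasFDerivAt_fst.mul (hP2 2 x)).const_mul (3*c3)).add
        ((hP2 3 x).const_mul (4*c4))))
  erw [pd2_of _ H]
  simp
  try ring


lemma pdEd_1 (hKd : Differentiable ℝ K) :
    pd1 (Ed γ d c0 c3 c4 K) = E1d γ d c0 c3 c4 K := by
  funext x
  unfold Ed E1d Gd G1d F11 F22 F21 F1d F2d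
  have HF11 := (hasFDerivAt_const (γ^2) x).add ((hP1 2 x).const_mul (12*c0))
  have HF22 := ((hasFDerivAt_const (1:ℝ) x).add (hasFDerivAt_snd.const_mul (6*d))).add
      (((hasFDerivAt_fst.mul hasFDerivAt_snd).const_mul (6*c3)).add
        ((hP2 2 x).const_mul (12*c4)))
  have HF21 := (hasFDerivAt_const γ x).add ((hP2 2 x).const_mul (3*c3))
  have HF1d := ((hasFDerivAt_fst.const_mul (γ^2)).add (hasFDerivAt_snd.const_mul γ)).add
      (((hP1 3 x).const_mul (4*c0)).add ((hP2 3 x).const_mul c3))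
  have HF2d := (((hasFDerivAt_fst.const_mul γ).add hasFDerivAt_snd).add
      ((hP2 2 x).const_mul (3*d))).add
      (((hasFDerivAt_fst.mul (hP2 2 x)).const_mul (3*c3)).add ((hP2 3 x).const_mul (4*c4)))
  have HGd := ((hasFDerivAt_const (1:ℝ) x).add (HF1d.const_mul 2)).add
      ((HF1d.mul HF1d).add (HF2d.mul HF2d))
  have HEd := ((HF11.mul HF22).sub (HF21.mul HF21)).sub
      (((hKd x).hasFDerivAt.mul HGd).const_mul (1/2))
  erw [pd1_of _ HEd]
  simp
  try ring

lemma pdEd_2 (hKd : Differentiable ℝ K) :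
    pd2 (Ed γ d c0 c3 c4 K) = E2d γ d c0 c3 c4 K := by
  funext x
  unfold Ed E2d Gd G2d F11 F22 F21 F1d F2d
  have HF11 := (hasFDerivAt_const (γ^2) x).add ((hP1 2 x).const_mul (12*c0))
  have HF22 := ((hasFDerivAt_const (1:ℝ) x).add (hasFDerivAt_snd.const_mul (6*d))).add
      (((hasFDerivAt_fst.mul hasFDerivAt_snd).const_mul (6*c3)).add
        ((hP2 2 x).const_mul (12*c4)))
  have HF21 := (hasFDerivAt_const γ x).add ((hP2 2 x).const_mul (3*c3))
  have HF1d := ((hasFDerivAt_fst.const_mul (γ^2)).add (hasFDerivAt_snd.const_mul γ)).add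
      (((hP1 3 x).const_mul (4*c0)).add ((hP2 3 x).const_mul c3))
  have HF2d := (((hasFDerivAt_fst.const_mul γ).add hasFDerivAt_snd).add
      ((hP2 2 x).const_mul (3*d))).add
      (((hasFDerivAt_fst.mul (hP2 2 x)).const_mul (3*c3)).add ((hP2 3 x).const_mul (4*c4)))
  have HGd := ((hasFDerivAt_const (1:ℝ) x).add (HF1d.const_mul 2)).add
      ((HF1d.mul HF1d).add (HF2d.mul HF2d))
  have HEd := ((HF11.mul HF22).sub (HF21.mul HF21)).sub
      (((hKd x).hasFDerivAt.mul HGd).const_mul (1/2))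
  erw [pd2_of _ HEd]
  simp
  try ring

lemma pdE1d_1 (hKd : Differentiable ℝ K) (hKdd : DifferentiableAt ℝ (fderiv ℝ K) 0) :
    pd1 (E1d γ d c0 c3 c4 K) 0 =
      24*c0 - 1/2*(fderiv ℝ (fderiv ℝ K) 0 (1,0) (1,0)
        + fderiv ℝ K 0 (1,0) * (2*γ^2)
        + (fderiv ℝ K 0 (1,0) * (2*γ^2) + K 0 * (2*γ^4 + 2*γ^2))) := by
  unfold E1d Gd G1d F11 F22 F21 F1d F2d
  have HF11 := (hasFDerivAt_const (γ^2) (0:ℝ×ℝ)).add ((hP1 2 0).const_mul (12*c0))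
  have HF22 := ((hasFDerivAt_const (1:ℝ) (0:ℝ×ℝ)).add (hasFDerivAt_snd.const_mul (6*d))).add
      (((hasFDerivAt_fst.mul hasFDerivAt_snd).const_mul (6*c3)).add
        ((hP2 2 0).const_mul (12*c4)))
  have HF21 := (hasFDerivAt_const γ (0:ℝ×ℝ)).add ((hP2 2 0).const_mul (3*c3))
  have HF1d := ((hasFDerivAt_fst.const_mul (γ^2)).add (hasFDerivAt_snd.const_mul γ)).add
      (((hP1 3 0).const_mul (4*c0)).add ((hP2 3 0).const_mul c3))
  have HF2d := (((hasFDerivAt_fst.const_mul γ).add hasFDerivAt_snd).add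
      ((hP2 2 0).const_mul (3*d))).add
      (((hasFDerivAt_fst.mul (hP2 2 0)).const_mul (3*c3)).add ((hP2 3 0).const_mul (4*c4)))
  have HGd := ((hasFDerivAt_const (1:ℝ) (0:ℝ×ℝ)).add (HF1d.const_mul 2)).add
      ((HF1d.mul HF1d).add (HF2d.mul HF2d))
  have HG1d := ((HF11.const_mul 2).add ((HF1d.mul HF11).const_mul 2)).add
      ((HF2d.mul HF21).const_mul 2)
  have Hk1 := (hKdd.hasFDerivAt).clm_apply (hasFDerivAt_const (((1:ℝ),(0:ℝ))) (0:ℝ×ℝ))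
  have HA := ((hasFDerivAt_fst.mul HF22).const_mul (24*c0)).add
      ((hasFDerivAt_snd.mul HF11).const_mul (6*c3))
  have HE := HA.sub (((Hk1.mul HGd).add ((hKd 0).hasFDerivAt.mul HG1d)).const_mul (1/2))
  erw [pd1_of _ HE]
  simp
  try ring

lemma pdE1d_2 (hKd : Differentiable ℝ K) (hKdd : DifferentiableAt ℝ (fderiv ℝ K) 0) :
    pd2 (E1d γ d c0 c3 c4 K) 0 =
      6*c3*γ^2 - 1/2*(fderiv ℝ (fderiv ℝ K) 0 (0,1) (1,0)
        + fderiv ℝ K 0 (1,0) * (2*γ)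
        + (fderiv ℝ K 0 (0,1) * (2*γ^2) + K 0 * (2*γ^3 + 2*γ))) := by
  unfold E1d Gd G1d F11 F22 F21 F1d F2d
  have HF11 := (hasFDerivAt_const (γ^2) (0:ℝ×ℝ)).add ((hP1 2 0).const_mul (12*c0))
  have HF22 := ((hasFDerivAt_const (1:ℝ) (0:ℝ×ℝ)).add (hasFDerivAt_snd.const_mul (6*d))).add
      (((hasFDerivAt_fst.mul hasFDerivAt_snd).const_mul (6*c3)).add
        ((hP2 2 0).const_mul (12*c4)))
  have HF21 := (hasFDerivAt_const γ (0:ℝ×ℝ)).add ((hP2 2 0).const_mul (3*c3))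
  have HF1d := ((hasFDerivAt_fst.const_mul (γ^2)).add (hasFDerivAt_snd.const_mul γ)).add
      (((hP1 3 0).const_mul (4*c0)).add ((hP2 3 0).const_mul c3))
  have HF2d := (((hasFDerivAt_fst.const_mul γ).add hasFDerivAt_snd).add
      ((hP2 2 0).const_mul (3*d))).add
      (((hasFDerivAt_fst.mul (hP2 2 0)).const_mul (3*c3)).add ((hP2 3 0).const_mul (4*c4)))
  have HGd := ((hasFDerivAt_const (1:ℝ) (0:ℝ×ℝ)).add (HF1d.const_mul 2)).add
      ((HF1d.mul HF1d).add (HF2d.mul HF2d))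
  have HG1d := ((HF11.const_mul 2).add ((HF1d.mul HF11).const_mul 2)).add
      ((HF2d.mul HF21).const_mul 2)
  have Hk1 := (hKdd.hasFDerivAt).clm_apply (hasFDerivAt_const (((1:ℝ),(0:ℝ))) (0:ℝ×ℝ))
  have HA := ((hasFDerivAt_fst.mul HF22).const_mul (24*c0)).add
      ((hasFDerivAt_snd.mul HF11).const_mul (6*c3))
  have HE := HA.sub (((Hk1.mul HGd).add ((hKd 0).hasFDerivAt.mul HG1d)).const_mul (1/2))
  erw [pd2_of _ HE]
  simp
  try ring

lemma pdE2d_1 (hKd : Differentiable ℝ K) (hKdd : DifferentiableAt ℝ (fderiv ℝ K) 0) :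
    pd1 (E2d γ d c0 c3 c4 K) 0 =
      6*c3*γ^2 - 1/2*(fderiv ℝ (fderiv ℝ K) 0 (1,0) (0,1)
        + fderiv ℝ K 0 (0,1) * (2*γ^2)
        + (fderiv ℝ K 0 (1,0) * (2*γ) + K 0 * (2*γ^3 + 2*γ))) := by
  unfold E2d Gd G2d F11 F22 F21 F1d F2d
  have HF11 := (hasFDerivAt_const (γ^2) (0:ℝ×ℝ)).add ((hP1 2 0).const_mul (12*c0))
  have HF22 := ((hasFDerivAt_const (1:ℝ) (0:ℝ×ℝ)).add (hasFDerivAt_snd.const_mul (6*d))).add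
      (((hasFDerivAt_fst.mul hasFDerivAt_snd).const_mul (6*c3)).add
        ((hP2 2 0).const_mul (12*c4)))
  have HF21 := (hasFDerivAt_const γ (0:ℝ×ℝ)).add ((hP2 2 0).const_mul (3*c3))
  have HF1d := ((hasFDerivAt_fst.const_mul (γ^2)).add (hasFDerivAt_snd.const_mul γ)).add
      (((hP1 3 0).const_mul (4*c0)).add ((hP2 3 0).const_mul c3))
  have HF2d := (((hasFDerivAt_fst.const_mul γ).add hasFDerivAt_snd).add
      ((hP2 2 0).const_mul (3*d))).add
      (((hasFDerivAt_fst.mul (hP2 2 0)).const_mul (3*c3)).add ((hP2 3 0).const_mul (4*c4)))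
  have HGd := ((hasFDerivAt_const (1:ℝ) (0:ℝ×ℝ)).add (HF1d.const_mul 2)).add
      ((HF1d.mul HF1d).add (HF2d.mul HF2d))
  have HG2d := ((HF21.const_mul 2).add ((HF1d.mul HF21).const_mul 2)).add
      ((HF2d.mul HF22).const_mul 2)
  have Hk2 := (hKdd.hasFDerivAt).clm_apply (hasFDerivAt_const (((0:ℝ),(1:ℝ))) (0:ℝ×ℝ))
  have HS1 := HF11.mul ((hasFDerivAt_const (6*d) (0:ℝ×ℝ)).add
      ((hasFDerivAt_fst.const_mul (6*c3)).add (hasFDerivAt_snd.const_mul (24*c4))))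
  have HS2 := (hasFDerivAt_snd.mul HF21).const_mul (12*c3)
  have HE := (HS1.sub HS2).sub
      (((Hk2.mul HGd).add ((hKd 0).hasFDerivAt.mul HG2d)).const_mul (1/2))
  erw [pd1_of _ HE]
  simp
  try ring

lemma pdE2d_2 (hKd : Differentiable ℝ K) (hKdd : DifferentiableAt ℝ (fderiv ℝ K) 0) :
    pd2 (E2d γ d c0 c3 c4 K) 0 =
      24*c4*γ^2 - 12*c3*γ - 1/2*(fderiv ℝ (fderiv ℝ K) 0 (0,1) (0,1)
        + fderiv ℝ K 0 (0,1) * (2*γ)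
        + (fderiv ℝ K 0 (0,1) * (2*γ) + K 0 * (2*γ^2 + 2))) := by
  unfold E2d Gd G2d F11 F22 F21 F1d F2d
  have HF11 := (hasFDerivAt_const (γ^2) (0:ℝ×ℝ)).add ((hP1 2 0).const_mul (12*c0))
  have HF22 := ((hasFDerivAt_const (1:ℝ) (0:ℝ×ℝ)).add (hasFDerivAt_snd.const_mul (6*d))).add
      (((hasFDerivAt_fst.mul hasFDerivAt_snd).const_mul (6*c3)).add
        ((hP2 2 0).const_mul (12*c4)))
  have HF21 := (hasFDerivAt_const γ (0:ℝ×ℝ)).add ((hP2 2 0).const_mul (3*c3))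
  have HF1d := ((hasFDerivAt_fst.const_mul (γ^2)).add (hasFDerivAt_snd.const_mul γ)).add
      (((hP1 3 0).const_mul (4*c0)).add ((hP2 3 0).const_mul c3))
  have HF2d := (((hasFDerivAt_fst.const_mul γ).add hasFDerivAt_snd).add
      ((hP2 2 0).const_mul (3*d))).add
      (((hasFDerivAt_fst.mul (hP2 2 0)).const_mul (3*c3)).add ((hP2 3 0).const_mul (4*c4)))
  have HGd := ((hasFDerivAt_const (1:ℝ) (0:ℝ×ℝ)).add (HF1d.const_mul 2)).add
      ((HF1d.mul HF1d).add (HF2d.mul HF2d))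
  have HG2d := ((HF21.const_mul 2).add ((HF1d.mul HF21).const_mul 2)).add
      ((HF2d.mul HF22).const_mul 2)
  have Hk2 := (hKdd.hasFDerivAt).clm_apply (hasFDerivAt_const (((0:ℝ),(1:ℝ))) (0:ℝ×ℝ))
  have HS1 := HF11.mul ((hasFDerivAt_const (6*d) (0:ℝ×ℝ)).add
      ((hasFDerivAt_fst.const_mul (6*c3)).add (hasFDerivAt_snd.const_mul (24*c4))))
  have HS2 := (hasFDerivAt_snd.mul HF21).const_mul (12*c3)
  have HE := (HS1.sub HS2).sub
      (((Hk2.mul HGd).add ((hKd 0).hasFDerivAt.mul HG2d)).const_mul (1/2))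
  erw [pd2_of _ HE]
  simp
  try ring


lemma clm_zero {W : Type*} [NormedAddCommGroup W] [NormedSpace ℝ W] {L : ℝ × ℝ →L[ℝ] W}
    (h1 : L (1, 0) = 0) (h2 : L (0, 1) = 0) : L = 0 := by
  apply ContinuousLinearMap.ext
  intro p
  have hp : p = p.1 • ((1 : ℝ), (0 : ℝ)) + p.2 • ((0 : ℝ), (1 : ℝ)) := by
    simp [Prod.ext_iff]
  rw [hp, map_add, map_smul, map_smul, h1, h2]
  simp

lemma pd_swap {f : ℝ × ℝ → ℝ} {x : ℝ × ℝ} (hf : DifferentiableAt ℝ (fderiv ℝ f) x)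
    (v w : ℝ × ℝ) :
    fderiv ℝ (fun y => fderiv ℝ f y w) x v = fderiv ℝ (fderiv ℝ f) x v w := by
  rw [fderiv_clm_apply hf (differentiableAt_const w)]
  simp

lemma cube_bound (f : ℝ × ℝ → ℝ) (hf : ContDiff ℝ 3 f) (h0 : f 0 = 0)
    (h1 : fderiv ℝ f 0 = 0) (h2 : fderiv ℝ (fderiv ℝ f) 0 = 0) :
    ∃ C > (0:ℝ), ∀ x : ℝ × ℝ, ‖x‖ ≤ 1 → |f x| ≤ C * ‖x‖ ^ 3 := by
  have hf' : ContDiff ℝ 2 (fderiv ℝ f) := hf.fderiv_right (by norm_num)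
  have hf'' : ContDiff ℝ 1 (fderiv ℝ (fderiv ℝ f)) := hf'.fderiv_right (by norm_num)
  letI : NormedAddCommGroup (ℝ × ℝ →L[ℝ] ℝ × ℝ →L[ℝ] ℝ) := inferInstance
  letI : NormedSpace ℝ (ℝ × ℝ →L[ℝ] ℝ × ℝ →L[ℝ] ℝ) := inferInstance
  have hgc : ContinuousOn (fderiv ℝ (fderiv ℝ (fderiv ℝ f))) (Metric.closedBall 0 1) :=
    (hf''.fderiv_right (m := 0) (by norm_num)).continuous.continuousOn
  obtain ⟨M, hM⟩ := (isCompact_closedBall (0 : ℝ × ℝ) 1).exists_bound_of_continuousOn hgc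
  refine ⟨max M 1, by positivity, ?_⟩
  intro x hx
  set M' := max M 1 with hM'
  have hM'0 : (0:ℝ) ≤ M' := by positivity
  have mem1 : ∀ y : ℝ × ℝ, y ∈ Metric.closedBall (0 : ℝ × ℝ) ‖y‖ := by
    intro y; simp [Metric.mem_closedBall]
  have mem0 : ∀ y : ℝ × ℝ, (0 : ℝ × ℝ) ∈ Metric.closedBall (0 : ℝ × ℝ) ‖y‖ := by
    intro y; simp [Metric.mem_closedBall]
  have step1 : ∀ y : ℝ × ℝ, ‖y‖ ≤ 1 → ‖fderiv ℝ (fderiv ℝ f) y‖ ≤ M' * ‖y‖ := by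
    intro y hy
    have := (convex_closedBall (0 : ℝ × ℝ) 1).norm_image_sub_le_of_norm_hasFDerivWithin_le
      (C := M')
      (fun z _ => ((hf''.differentiable (by norm_num)) z).hasFDerivAt.hasFDerivWithinAt)
      (fun z hz => le_trans (hM z hz) (le_max_left M 1))
      (Metric.mem_closedBall_self zero_le_one)
      (by simpa [Metric.mem_closedBall] using hy)
    simpa [h2] using this
  have step2 : ∀ y : ℝ × ℝ, ‖y‖ ≤ 1 → ‖fderiv ℝ f y‖ ≤ M' * ‖y‖ * ‖y‖ := by
    intro y hy
    have := (convex_closedBall (0 : ℝ × ℝ) ‖y‖).norm_image_sub_le_of_norm_hasFDerivWithin_le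
      (C := M' * ‖y‖) (f' := fderiv ℝ (fderiv ℝ f))
      (fun z _ => ((hf'.differentiable (by norm_num)) z).hasFDerivAt.hasFDerivWithinAt)
      (fun z hz => by
        have hz' : ‖z‖ ≤ ‖y‖ := by simpa [Metric.mem_closedBall] using hz
        exact le_trans (step1 z (hz'.trans hy))
          (mul_le_mul_of_nonneg_left hz' hM'0))
      (mem0 y) (mem1 y)
    simpa [h1] using this
  have step3 := (convex_closedBall (0 : ℝ × ℝ) ‖x‖).norm_image_sub_le_of_norm_hasFDerivWithin_le
      (C := M' * ‖x‖ * ‖x‖) (f' := fderiv ℝ f)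
      (fun z _ => ((hf.differentiable (by norm_num)) z).hasFDerivAt.hasFDerivWithinAt)
      (fun z hz => by
        have hz' : ‖z‖ ≤ ‖x‖ := by simpa [Metric.mem_closedBall] using hz
        refine le_trans (step2 z (hz'.trans hx)) ?_
        have h1' : M' * ‖z‖ ≤ M' * ‖x‖ := mul_le_mul_of_nonneg_left hz' hM'0
        nlinarith [norm_nonneg z, norm_nonneg x])
      (mem0 x) (mem1 x)
  rw [h0] at step3
  calc |f x| = ‖f x - 0‖ := by simp [Real.norm_eq_abs]
    _ ≤ M' * ‖x‖ * ‖x‖ * ‖x - 0‖ := step3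
    _ = M' * ‖x‖ ^ 3 := by rw [sub_zero]; ring

end Stmt5Aux

open Stmt5Aux

/-- Mixed-type case: if `K` is `C³`, vanishes at `0`, with `∂₁K(0) = 0` and `∂₂K(0) = 2R`,
then for every `γ > 0` there exist `d` (one may take `d = R/(6γ²)`) and a homogeneous
quartic `P₄` such that `ĥ = (γ²/2)x₁² + γx₁x₂ + (1/2)x₂² + d x₂³ + P₄` solves the
Euclidean-model Bao–Ratiu Monge–Ampère equation up to an error `O(|x|³)`. -/
theorem stmt5 (R γ : ℝ) (hR : 0 < R) (hγ : 0 < γ)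
    (K : ℝ × ℝ → ℝ) (hK : ContDiff ℝ 3 K) (hK0 : K (0, 0) = 0)
    (hK1 : pd1 K (0, 0) = 0) (hK2 : pd2 K (0, 0) = 2 * R) :
    ∃ d : ℝ, ∃ P4 : ℝ × ℝ → ℝ,
      (∃ c0 c1 c2 c3 c4 : ℝ, ∀ x : ℝ × ℝ,
        P4 x = c0 * x.1 ^ 4 + c1 * x.1 ^ 3 * x.2 + c2 * x.1 ^ 2 * x.2 ^ 2
          + c3 * x.1 * x.2 ^ 3 + c4 * x.2 ^ 4) ∧
      (∃ C > (0 : ℝ), ∃ r > (0 : ℝ), ∀ x : ℝ × ℝ, Real.sqrt (x.1 ^ 2 + x.2 ^ 2) ≤ r →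
        |detHess (fun y => (γ ^ 2 / 2) * y.1 ^ 2 + γ * y.1 * y.2 + (1 / 2) * y.2 ^ 2
              + d * y.2 ^ 3 + P4 y) x
            - K x / 2 *
              (1 + 2 * pd1 (fun y => (γ ^ 2 / 2) * y.1 ^ 2 + γ * y.1 * y.2
                    + (1 / 2) * y.2 ^ 2 + d * y.2 ^ 3 + P4 y) x
                + ((pd1 (fun y => (γ ^ 2 / 2) * y.1 ^ 2 + γ * y.1 * y.2
                      + (1 / 2) * y.2 ^ 2 + d * y.2 ^ 3 + P4 y) x) ^ 2
                  + (pd2 (fun y => (γ ^ 2 / 2) * y.1 ^ 2 + γ * y.1 * y.2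
                      + (1 / 2) * y.2 ^ 2 + d * y.2 ^ 3 + P4 y) x) ^ 2))|
          ≤ C * (x.1 ^ 2 + x.2 ^ 2) ^ ((3 : ℝ) / 2)) ∧
      d = R / (6 * γ ^ 2) := by
  have hγ' : γ ≠ 0 := ne_of_gt hγ
  have hKdiff : Differentiable ℝ K := hK.differentiable (by norm_num)
  have hKd2 : ContDiff ℝ 2 (fderiv ℝ K) := hK.fderiv_right (by norm_num)
  have hKdd : Differentiable ℝ (fderiv ℝ K) := hKd2.differentiable (by norm_num)
  have hK0' : K 0 = 0 := hK0
  have hk1 : fderiv ℝ K 0 (1, 0) = 0 := hK1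
  have hk2 : fderiv ℝ K 0 (0, 1) = 2 * R := hK2
  have hsym : fderiv ℝ (fderiv ℝ K) 0 (1, 0) (0, 1)
      = fderiv ℝ (fderiv ℝ K) 0 (0, 1) (1, 0) :=
    second_derivative_symmetric (fun y => (hKdiff y).hasFDerivAt)
      ((hKdd 0).hasFDerivAt) (1, 0) (0, 1)
  set a11 := fderiv ℝ (fderiv ℝ K) 0 (1, 0) (1, 0) with ha11
  set a21 := fderiv ℝ (fderiv ℝ K) 0 (0, 1) (1, 0) with ha21
  set a22 := fderiv ℝ (fderiv ℝ K) 0 (0, 1) (0, 1) with ha22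
  set d := R / (6 * γ ^ 2) with hd
  set c0 := a11 / 48 with hc0
  set c3 := a21 / (12 * γ ^ 2) + R / 3 with hc3
  set c4 := (a22 / 2 + 4 * R * γ + 12 * γ * c3) / (24 * γ ^ 2) with hc4
  refine ⟨d, fun y => c0 * y.1 ^ 4 + c3 * (y.1 * y.2 ^ 3) + c4 * y.2 ^ 4,
    ⟨c0, 0, 0, c3, c4, fun x => by ring⟩, ?_, hd⟩
  -- key facts about Ed
  have hE3 : ContDiff ℝ 3 (Ed γ d c0 c3 c4 K) := by
    unfold Ed Gd F11 F22 F21 F1d F2d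
    fun_prop
  have hEd2 : ContDiff ℝ 2 (fderiv ℝ (Ed γ d c0 c3 c4 K)) := hE3.fderiv_right (by norm_num)
  have hEdd : DifferentiableAt ℝ (fderiv ℝ (Ed γ d c0 c3 c4 K)) 0 :=
    (hEd2.differentiable (by norm_num)) 0
  have hpd1E := pdEd_1 γ d c0 c3 c4 K hKdiff
  have hpd2E := pdEd_2 γ d c0 c3 c4 K hKdiff
  have hE0 : Ed γ d c0 c3 c4 K 0 = 0 := by
    unfold Ed Gd F11 F22 F21 F1d F2d
    simp [hK0']
    ring
  have hE1v : pd1 (Ed γ d c0 c3 c4 K) 0 = 0 := by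
    rw [hpd1E]
    unfold E1d Gd G1d F11 F22 F21 F1d F2d
    simp [hK0', hk1]
  have hE2v : pd2 (Ed γ d c0 c3 c4 K) 0 = 0 := by
    rw [hpd2E]
    unfold E2d Gd G2d F11 F22 F21 F1d F2d
    simp [hK0', hk2]
    rw [hd]
    field_simp
    ring
  have hE1 : fderiv ℝ (Ed γ d c0 c3 c4 K) 0 = 0 := clm_zero hE1v hE2v
  have hE2 : fderiv ℝ (fderiv ℝ (Ed γ d c0 c3 c4 K)) 0 = 0 := by
    refine clm_zero (clm_zero ?_ ?_) (clm_zero ?_ ?_)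
    · rw [← pd_swap hEdd (1, 0) (1, 0)]
      show pd1 (pd1 (Ed γ d c0 c3 c4 K)) 0 = 0
      rw [hpd1E, pdE1d_1 γ d c0 c3 c4 K hKdiff (hKdd 0)]
      rw [hk1, hK0', ← ha11, hc0]
      ring
    · rw [← pd_swap hEdd (1, 0) (0, 1)]
      show pd1 (pd2 (Ed γ d c0 c3 c4 K)) 0 = 0
      rw [hpd2E, pdE2d_1 γ d c0 c3 c4 K hKdiff (hKdd 0)]
      rw [hk1, hk2, hK0', hsym, hc3]
      field_simp
      ring
    · rw [← pd_swap hEdd (0, 1) (1, 0)]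
      show pd2 (pd1 (Ed γ d c0 c3 c4 K)) 0 = 0
      rw [hpd1E, pdE1d_2 γ d c0 c3 c4 K hKdiff (hKdd 0)]
      rw [hk1, hk2, hK0', ← ha21, hc3]
      field_simp
      ring
    · rw [← pd_swap hEdd (0, 1) (0, 1)]
      show pd2 (pd2 (Ed γ d c0 c3 c4 K)) 0 = 0
      rw [hpd2E, pdE2d_2 γ d c0 c3 c4 K hKdiff (hKdd 0)]
      rw [hk2, hK0', ← ha22, hc4, hc3]
      field_simp
      ring
  obtain ⟨C, hC, hb⟩ := cube_bound (Ed γ d c0 c3 c4 K) hE3 hE0 hE1 hE2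
  refine ⟨C, hC, 1, one_pos, ?_⟩
  intro x hsq
  have hsq0 : (0:ℝ) ≤ x.1 ^ 2 + x.2 ^ 2 := by positivity
  have hxs : ‖x‖ ≤ Real.sqrt (x.1 ^ 2 + x.2 ^ 2) := by
    rw [Prod.norm_def]
    apply max_le
    · rw [Real.norm_eq_abs, ← Real.sqrt_sq_eq_abs]
      exact Real.sqrt_le_sqrt (by nlinarith)
    · rw [Real.norm_eq_abs, ← Real.sqrt_sq_eq_abs]
      exact Real.sqrt_le_sqrt (by nlinarith)
  have hx1 : ‖x‖ ≤ 1 := hxs.trans hsq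
  have hEb := hb x hx1
  have hcube : ‖x‖ ^ 3 ≤ (x.1 ^ 2 + x.2 ^ 2) ^ ((3:ℝ)/2) := by
    have h3 : Real.sqrt (x.1 ^ 2 + x.2 ^ 2) ^ 3 = (x.1 ^ 2 + x.2 ^ 2) ^ ((3:ℝ)/2) := by
      rw [show ((3:ℝ)/2) = (1/2) * ((3:ℕ):ℝ) by norm_num, Real.rpow_mul hsq0,
        ← Real.sqrt_eq_rpow, Real.rpow_natCast]
    calc ‖x‖ ^ 3 ≤ Real.sqrt (x.1 ^ 2 + x.2 ^ 2) ^ 3 :=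
          pow_le_pow_left₀ (norm_nonneg x) hxs 3
      _ = _ := h3
  have hfin : |Ed γ d c0 c3 c4 K x| ≤ C * (x.1 ^ 2 + x.2 ^ 2) ^ ((3:ℝ)/2) :=
    hEb.trans (mul_le_mul_of_nonneg_left hcube hC.le)
  have hgoal : detHess (F0 γ d c0 c3 c4) x
      - K x / 2 * (1 + 2 * pd1 (F0 γ d c0 c3 c4) x
        + ((pd1 (F0 γ d c0 c3 c4) x) ^ 2 + (pd2 (F0 γ d c0 c3 c4) x) ^ 2))
      = Ed γ d c0 c3 c4 K x := by
    rw [detHess, pdF0_1, pdF0_2, pdF1d_1, pdF2d_1, pdF2d_2]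
    unfold Ed Gd F11 F22 F21 F1d F2d
    ring
  calc |detHess (F0 γ d c0 c3 c4) x
      - K x / 2 * (1 + 2 * pd1 (F0 γ d c0 c3 c4) x
        + ((pd1 (F0 γ d c0 c3 c4) x) ^ 2 + (pd2 (F0 γ d c0 c3 c4) x) ^ 2))|
      = |Ed γ d c0 c3 c4 K x| := by rw [hgoal]
    _ ≤ C * (x.1 ^ 2 + x.2 ^ 2) ^ ((3:ℝ)/2) := hfin
end
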